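/- For the 2×2 identity matrix A = I₂ and the radius matrix Δ with rows (1, 2) and (1, 1), the regularity radius equals √2 − 1; in particular the regularity radius of a matrix with rational entries can be irrational. -/

import Mathlib

open Matrix
open scoped ENNReal NNReal

noncomputable def regRad {n : ℕ} (A Δ : Matrix (Fin n) (Fin n) ℝ) : ℝ≥0∞ :=
  ⨅ δ ∈ {δ : ℝ≥0 | ∃ M : Matrix (Fin n) (Fin n) ℝ,
      (∀ i j, |M i j - A i j| ≤ (δ : ℝ) * Δ i j) ∧ M.det = 0},
    (δ : ℝ≥0∞)

theorem regRad_example_irrational :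
    regRad (1 : Matrix (Fin 2) (Fin 2) ℝ) !![1, 2; 1, 1]
      = ENNReal.ofReal (Real.sqrt 2 - 1) ∧ Irrational (Real.sqrt 2 - 1) := by
  have h2 : Real.sqrt 2 ^ 2 = 2 := Real.sq_sqrt (by norm_num)
  have hs0 : 0 ≤ Real.sqrt 2 := Real.sqrt_nonneg 2
  have h1 : 1 < Real.sqrt 2 := by nlinarith
  have hlt2 : Real.sqrt 2 < 2 := by nlinarith
  set r : ℝ := Real.sqrt 2 - 1 with hr
  have hr0 : 0 ≤ r := by rw [hr]; linarith
  have hrc : ((r.toNNReal : ℝ)) = r := Real.coe_toNNReal r hr0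
  constructor
  · apply le_antisymm
    · have hmem : r.toNNReal ∈ {δ : ℝ≥0 | ∃ M : Matrix (Fin 2) (Fin 2) ℝ,
          (∀ i j, |M i j - (1 : Matrix (Fin 2) (Fin 2) ℝ) i j| ≤ (δ : ℝ) * !![(1:ℝ), 2; 1, 1] i j) ∧ M.det = 0} := by
        refine ⟨!![1 - r, 2 * r; r, 1 - r], ?_, ?_⟩
        · intro i j
          fin_cases i <;> fin_cases j <;>
            simp [Matrix.one_apply, hrc, abs_le] <;> (try constructor) <;> linarith [abs_of_nonneg hr0]
        · rw [Matrix.det_fin_two_of]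
          nlinarith
      calc regRad (1 : Matrix (Fin 2) (Fin 2) ℝ) !![1, 2; 1, 1] ≤ (r.toNNReal : ℝ≥0∞) :=
            iInf₂_le r.toNNReal hmem
        _ = ENNReal.ofReal r := rfl
    · refine le_iInf₂ fun δ hδ => ?_
      obtain ⟨M, hM, hdet⟩ := hδ
      show ENNReal.ofReal r ≤ (δ : ℝ≥0∞)
      rw [show ENNReal.ofReal r = (r.toNNReal : ℝ≥0∞) from rfl, ENNReal.coe_le_coe,
        Real.toNNReal_le_iff_le_coe]
      by_contra hcon
      push_neg at hcon
      have hδ0 : (0:ℝ) ≤ (δ : ℝ) := δ.coe_nonneg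
      have h00 := hM 0 0
      have h01 := hM 0 1
      have h10 := hM 1 0
      have h11 := hM 1 1
      simp [Matrix.one_apply, abs_le] at h00 h01 h10 h11
      rw [Matrix.det_fin_two] at hdet
      have hrlt : (δ:ℝ) < Real.sqrt 2 - 1 := hcon
      nlinarith [h00.1, h00.2, h01.1, h01.2, h10.1, h10.2, h11.1, h11.2,
        mul_nonneg hδ0 hδ0, sq_nonneg ((δ:ℝ)), sq_nonneg (Real.sqrt 2 * (δ:ℝ)),
        mul_pos (show (0:ℝ) < 1 - (δ:ℝ) by linarith) (show (0:ℝ) < 1 - (δ:ℝ) by linarith)]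
  · simpa using irrational_sqrt_two.sub_intCast 1
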